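/- Every stable-stratified labeling S of a finite abstract argumentation framework AF is finite, i.e., ∞ is not in the image of S. -/

import Mathlib

/-- Labels for arguments: in, out, undecided. -/
inductive Lab : Type where
  | argIn | argOut | argUndec
  deriving DecidableEq

/-- The set of arguments in `C` labeled `in` by `L`. -/
def inSet {α : Type*} (C : Set α) (L : α → Lab) : Set α := {a ∈ C | L a = Lab.argIn}

/-- The set of arguments in `C` labeled `undec` by `L`. -/
def undecSet {α : Type*} (C : Set α) (L : α → Lab) : Set α := {a ∈ C | L a = Lab.argUndec}

/-- `L` is a complete labeling of the subframework of `att` on the set `C` of arguments. -/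
def IsCompleteLab {α : Type*} (att : α → α → Prop) (C : Set α) (L : α → Lab) : Prop :=
  (∀ a ∈ C, L a = Lab.argOut → ∃ b ∈ C, L b = Lab.argIn ∧ att b a) ∧
  (∀ a ∈ C, L a = Lab.argIn → ∀ b ∈ C, att b a → L b = Lab.argOut) ∧
  (∀ a ∈ C, L a = Lab.argUndec →
    (∀ b ∈ C, att b a → L b ≠ Lab.argIn) ∧ (∃ b ∈ C, att b a ∧ L b ≠ Lab.argOut))

/-- The five semantics considered. -/
inductive Sem : Type where
  | complete | grounded | preferred | stable | semiStable

/-- `SemLab σ att C L` : `L` is a `σ`-labeling of the subframework of `att` on `C`. -/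
def SemLab {α : Type*} : Sem → (α → α → Prop) → Set α → (α → Lab) → Prop
  | Sem.complete, att, C, L => IsCompleteLab att C L
  | Sem.grounded, att, C, L => IsCompleteLab att C L ∧
      ∀ L', IsCompleteLab att C L' → inSet C L' ⊆ inSet C L → inSet C L ⊆ inSet C L'
  | Sem.preferred, att, C, L => IsCompleteLab att C L ∧
      ∀ L', IsCompleteLab att C L' → inSet C L ⊆ inSet C L' → inSet C L' ⊆ inSet C L
  | Sem.stable, att, C, L => IsCompleteLab att C L ∧ undecSet C L = ∅
  | Sem.semiStable, att, C, L => IsCompleteLab att C L ∧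
      ∀ L', IsCompleteLab att C L' → undecSet C L' ⊆ undecSet C L → undecSet C L ⊆ undecSet C L'

/-- `Stratified σ att C S` : `S` is a `σ`-stratified labeling of the subframework of `att`
on the set `C` of arguments (values of `S` outside `C` are irrelevant). -/
inductive Stratified {α : Type*} (σ : Sem) (att : α → α → Prop) : Set α → (α → ℕ∞) → Prop
  | ofEmpty {C : Set α} {S : α → ℕ∞} (L : α → Lab)
      (hL : SemLab σ att C L) (hin : inSet C L = ∅)
      (hS : ∀ a ∈ C, S a = ⊤) : Stratified σ att C S
  | ofStep {C : Set α} {S : α → ℕ∞} (L : α → Lab) (S' : α → ℕ∞)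
      (hL : SemLab σ att C L) (hin : (inSet C L).Nonempty)
      (hS' : Stratified σ att (C \ inSet C L) S')
      (h0 : ∀ a ∈ inSet C L, S a = 0)
      (h1 : ∀ a ∈ C \ inSet C L, S a = 1 + S' a) :
      Stratified σ att C S


lemma stable_aux {α : Type*} (att : α → α → Prop) {C : Set α} {S : α → ℕ∞}
    (hS : Stratified Sem.stable att C S) : ∀ a ∈ C, S a ≠ ⊤ := by
  induction hS with
  | ofEmpty L hL hin hSa =>
    intro a ha
    obtain ⟨⟨hout, _, _⟩, hund⟩ := hL
    exfalso
    cases hcase : L a with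
    | argIn =>
      have : a ∈ inSet _ L := ⟨ha, hcase⟩
      rw [hin] at this; exact this
    | argOut =>
      obtain ⟨b, hb, hbin, _⟩ := hout a ha hcase
      have : b ∈ inSet _ L := ⟨hb, hbin⟩
      rw [hin] at this; exact this
    | argUndec =>
      have : a ∈ undecSet _ L := ⟨ha, hcase⟩
      rw [hund] at this; exact this
  | @ofStep D T L S' hL hin hS' h0 h1 ih =>
    intro a ha
    by_cases h : L a = Lab.argIn
    · simp [h0 a ⟨ha, h⟩]
    · have hmem : a ∈ D \ inSet D L := ⟨ha, fun hc => h hc.2⟩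
      rw [h1 a hmem]
      have := ih a hmem
      intro hcontra
      rw [ENat.add_eq_top] at hcontra
      rcases hcontra with h' | h'
      · exact absurd h' (by simp)
      · exact this h'

/-- Every stable-stratified labeling of a finite abstract argumentation
framework is finite, i.e., `∞` is not in its image. -/
theorem stable_stratified_finite {α : Type*} [Fintype α] (att : α → α → Prop)
    (S : α → ℕ∞) (hS : Stratified Sem.stable att Set.univ S) :
    ∀ A : α, S A ≠ ⊤ := by
  intro A
  exact stable_aux att hS A (Set.mem_univ A)
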